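/- For every n ≥ 0, λ > 0, and μ ≠ 0, d/dx[(1+x)^μ C_n^{(λ)}(x)] = λ(1+x)^{μ−1}[(1 + (μ−λ)/(n+λ))C_n^{(λ+1)}(x) + 2C_{n−1}^{(λ+1)}(x) + (1 − (μ−λ)/(n+λ))C_{n−2}^{(λ+1)}(x)] for x ∈ (−1,1), where C_{−1}^{(λ+1)} = C_{−2}^{(λ+1)} = 0. -/

import Mathlib

open Real intervalIntegral

/-- Ultraspherical (Gegenbauer) polynomials via the three-term recurrence
`(n+1) C_{n+1} = 2(n+λ) x C_n − (n+2λ−1) C_{n−1}`, `C_0 = 1`, `C_{-1} = 0`. -/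
noncomputable def Geg (l : ℝ) : ℕ → ℝ → ℝ
  | 0, _ => 1
  | 1, x => 2 * l * x
  | (n + 2), x =>
      (2 * ((n : ℝ) + 1 + l) * x * Geg l (n + 1) x
        - ((n : ℝ) + 2 * l) * Geg l n x) / ((n : ℝ) + 2)

/-- Ultraspherical polynomials with integer index, zero for negative index. -/
noncomputable def GegZ (l : ℝ) (n : ℤ) (x : ℝ) : ℝ :=
  if 0 ≤ n then Geg l n.toNat x else 0

/-- `C_{n-1}`, zero for `n = 0`. -/
noncomputable def gm (l : ℝ) : ℕ → ℝ → ℝ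
  | 0, _ => 0
  | (k+1), x => Geg l k x

/-- `C_{n-2}`, zero for `n = 0, 1`. -/
noncomputable def gm2 (l : ℝ) : ℕ → ℝ → ℝ
  | 0, _ => 0
  | 1, _ => 0
  | (k+2), x => Geg l k x

lemma gm2_succ (l : ℝ) (n : ℕ) (x : ℝ) : gm2 l (n+1) x = gm l n x := by
  cases n <;> rfl

lemma geg_rec (l : ℝ) (n : ℕ) (x : ℝ) :
    ((n:ℝ)+2) * Geg l (n+2) x
      = 2*((n:ℝ)+1+l)*x*Geg l (n+1) x - ((n:ℝ)+2*l)*Geg l n x := by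
  have h : ((n:ℝ)+2) ≠ 0 := by positivity
  rw [Geg]
  field_simp

lemma recX (l : ℝ) (n : ℕ) (x : ℝ) :
    (n:ℝ) * Geg l n x = 2*((n:ℝ)-1+l)*x*gm l n x - ((n:ℝ)-2+2*l)*gm2 l n x := by
  match n with
  | 0 => simp [gm, gm2]
  | 1 => simp [gm, gm2, Geg]
  | (k+2) =>
    have h := geg_rec l k x
    simp only [gm, gm2]
    push_cast
    linear_combination h

lemma conn (l : ℝ) (hl : 0 < l) (n : ℕ) (x : ℝ) :
    ((n:ℝ)+l) * Geg l n x = l * (Geg (l+1) n x - gm2 (l+1) n x) := by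
  induction n using Nat.twoStepInduction with
  | zero => simp [Geg, gm2]
  | one => simp [Geg, gm2]; ring
  | more n ih1 ih2 =>
    have hN2 : ((n:ℝ)+2) ≠ 0 := by positivity
    have hNl : ((n:ℝ)+l) ≠ 0 := by positivity
    have r1 := geg_rec l n x
    have r2 := geg_rec (l+1) n x
    have r4 := recX (l+1) n x
    have i1 := ih2  -- conn at n+1
    have i0 := ih1  -- conn at n
    rw [gm2_succ] at i1
    have hg2 : gm2 (l+1) (n+2) x = Geg (l+1) n x := rfl
    rw [hg2]
    push_cast
    have H : (((n:ℝ)+2)*((n:ℝ)+l)) * (((n:ℝ)+2+l) * Geg l (n+2) x)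
        = (((n:ℝ)+2)*((n:ℝ)+l)) * (l * (Geg (l+1) (n+2) x - Geg (l+1) n x)) := by
      push_cast at i1 i0
      linear_combination (((n:ℝ)+l)*((n:ℝ)+2+l))*r1 - (((n:ℝ)+l)*l)*r2
        + (l*((n:ℝ)+l+2))*r4 + (2*((n:ℝ)+l)*((n:ℝ)+2+l)*x)*i1
        - (((n:ℝ)+2*l)*((n:ℝ)+2+l))*i0
    exact mul_left_cancel₀ (mul_ne_zero hN2 hNl) H

lemma gderiv (l : ℝ) (hl : 0 < l) (n : ℕ) (x : ℝ) :
    HasDerivAt (fun y => Geg l n y) (2*l*gm (l+1) n x) x := by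
  induction n using Nat.twoStepInduction with
  | zero => simpa [Geg, gm] using hasDerivAt_const x (1:ℝ)
  | one =>
    have h : HasDerivAt (fun y : ℝ => 2*l*y) (2*l) x := by
      simpa using (hasDerivAt_id x).const_mul (2*l)
    simpa [Geg, gm] using h
  | more n ih1 ih2 =>
    have hN2 : ((n:ℝ)+2) ≠ 0 := by positivity
    have hA : HasDerivAt (fun y : ℝ => 2*((n:ℝ)+1+l)*y) (2*((n:ℝ)+1+l)) x := by
      simpa using (hasDerivAt_id x).const_mul (2*((n:ℝ)+1+l))
    have h := ((hA.mul ih2).sub (ih1.const_mul ((n:ℝ)+2*l))).div_const ((n:ℝ)+2)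
    have key : (2*((n:ℝ)+1+l) * Geg l (n+1) x + (2*((n:ℝ)+1+l)*x) * (2*l*gm (l+1) (n+1) x)
        - ((n:ℝ)+2*l) * (2*l*gm (l+1) n x)) / ((n:ℝ)+2)
        = 2*l*gm (l+1) (n+2) x := by
      have i1 := conn l hl (n+1) x
      rw [gm2_succ] at i1
      have r3 := recX (l+1) (n+1) x
      have hg1 : gm (l+1) (n+1) x = Geg (l+1) n x := rfl
      have hg2' : gm2 (l+1) (n+1) x = gm (l+1) n x := gm2_succ _ _ _
      have hg3 : gm (l+1) (n+2) x = Geg (l+1) (n+1) x := rfl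
      rw [hg1, hg3]
      rw [hg1, hg2'] at r3
      push_cast at i1 r3 ⊢
      rw [div_eq_iff hN2]
      linear_combination 2*i1 - 2*l*r3
    rw [key] at h
    -- h has the function in unfolded form
    have hfun : (fun y => Geg l (n+2) y)
        = fun y => (2*((n:ℝ)+1+l)*y*Geg l (n+1) y - ((n:ℝ)+2*l)*Geg l n y) / ((n:ℝ)+2) := by
      funext y; rw [Geg]
    rw [hfun]
    exact h

theorem stmt12 (l μ : ℝ) (hl : 0 < l) (hμ : μ ≠ 0) (n : ℤ) (hn : 0 ≤ n) (x : ℝ)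
    (hx : x ∈ Set.Ioo (-1 : ℝ) 1) :
    HasDerivAt (fun y => (1 + y) ^ μ * GegZ l n y)
      (l * (1 + x) ^ (μ - 1) *
        ((1 + (μ - l) / ((n : ℝ) + l)) * GegZ (l + 1) n x
          + 2 * GegZ (l + 1) (n - 1) x
          + (1 - (μ - l) / ((n : ℝ) + l)) * GegZ (l + 1) (n - 2) x)) x := by
  obtain ⟨m, rfl⟩ := Int.eq_ofNat_of_zero_le hn
  have h0 : (0:ℝ) < 1 + x := by linarith [hx.1]
  have h0ne : (1:ℝ) + x ≠ 0 := ne_of_gt h0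
  have hml : ((m:ℝ)+l) ≠ 0 := by positivity
  have e0 : ∀ y, GegZ l (m:ℤ) y = Geg l m y := by
    intro y; simp [GegZ]
  have e1 : GegZ (l+1) ((m:ℤ)-1) x = gm (l+1) m x := by
    cases m with
    | zero => simp [GegZ, gm]
    | succ k => simp [GegZ, gm]
  have e0' : GegZ (l+1) (m:ℤ) x = Geg (l+1) m x := by simp [GegZ]
  have e2 : GegZ (l+1) ((m:ℤ)-2) x = gm2 (l+1) m x := by
    match m with
    | 0 => simp [GegZ, gm2]
    | 1 => simp [GegZ, gm2]
    | (k+2) => simp [GegZ, gm2]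
  simp only [e0, e0', e1, e2, Int.cast_natCast]
  have h1 : HasDerivAt (fun y : ℝ => (1+y)^μ) (1 * μ * (1+x)^(μ-1)) x :=
    ((hasDerivAt_id x).const_add 1).rpow_const (Or.inl h0ne)
  have h2 := gderiv l hl m x
  have h := h1.mul h2
  have hxp : (1+x)^μ = (1+x)^(μ-1)*(1+x) := by
    rw [← Real.rpow_add_one h0ne]; norm_num
  have key : μ * Geg l m x + (1+x) * (2*l*gm (l+1) m x)
      = l * ((1+(μ-l)/((m:ℝ)+l))*Geg (l+1) m x + 2*gm (l+1) m x
          + (1-(μ-l)/((m:ℝ)+l))*gm2 (l+1) m x) := by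
    have c1 := conn l hl m x
    have r1 := recX (l+1) m x
    field_simp
    linear_combination μ * c1 - l * r1
  refine h.congr_deriv ?_
  rw [hxp]
  linear_combination ((1+x)^(μ-1)) * key
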